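/- Let α_1, ..., α_m ∈ K be pairwise distinct with m ≥ 2, and let A = {f ∈ K[x] : f(α_1) = f(α_2) = ⋯ = f(α_m)}. Then A is a K-subalgebra of K[x] whose codimension equals m − 1, and A is generated as a K-algebra by the m polynomials p_i = (x − α_1)^i (x − α_2)⋯(x − α_m) for i = 1, ..., m. -/

import Mathlib

open Polynomial

lemma aux_pow_mul_mem {K : Type*} [Field K] (m : ℕ) (hm : 2 ≤ m) (a : K) (q : Polynomial K)
    (hq : q.Monic) (hdeg : q.natDegree = m - 1) (B : Subalgebra K (Polynomial K))
    (hgen : ∀ N, 1 ≤ N → N ≤ m → (X - C a) ^ N * q ∈ B) :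
    ∀ N, 1 ≤ N → (X - C a) ^ N * q ∈ B := by
  set s : Polynomial K := X - C a with hs
  have hqsum : q = ∑ k ∈ Finset.range m, C ((taylor a q).coeff k) * s ^ k := by
    have h2 := Polynomial.sum_over_range' (taylor a q) (f := fun i c => C c * s ^ i)
      (by simp) m (by rw [natDegree_taylor, hdeg]; omega)
    rw [← h2, hs]
    exact (sum_taylor_eq q a).symm
  have hctop : (taylor a q).coeff (m - 1) = 1 := by
    have hmono : (taylor a q).Monic := by
      rw [taylor_apply]; exact hq.comp_X_add_C a
    have hnd : (taylor a q).natDegree = m - 1 := by rw [natDegree_taylor, hdeg]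
    rw [← hnd]; exact hmono.coeff_natDegree
  intro N
  induction N using Nat.strong_induction_on with
  | _ N ih =>
    intro hN1
    by_cases hNm : N ≤ m
    · exact hgen N hN1 hNm
    · push_neg at hNm
      obtain ⟨b, rfl⟩ : ∃ b, N = m + b + 1 := ⟨N - m - 1, by omega⟩
      have e1 : (s * q) * (s ^ (b + 1) * q)
          = ∑ k ∈ Finset.range m, C ((taylor a q).coeff k) * (s ^ (b + 2 + k) * q) := by
        nth_rewrite 2 [hqsum]
        rw [Finset.mul_sum, Finset.mul_sum]
        refine Finset.sum_congr rfl fun k _ => ?_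
        ring
      rw [show m = m - 1 + 1 by omega, Finset.sum_range_succ, hctop, map_one, one_mul,
        show b + 2 + (m - 1) = m + b + 1 by omega] at e1
      have hid : s ^ (m + b + 1) * q = (s * q) * (s ^ (b + 1) * q)
          - ∑ k ∈ Finset.range (m - 1), C ((taylor a q).coeff k) * (s ^ (b + 2 + k) * q) := by
        rw [e1]; ring
      rw [hid]
      refine sub_mem (mul_mem ?_ (ih (b + 1) (by omega) (by omega)))
        (Subalgebra.sum_mem _ fun k hk => ?_)
      · have := hgen 1 le_rfl (by omega); simpa using this
      · have hk' := Finset.mem_range.mp hk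
        exact mul_mem (B.algebraMap_mem _) (ih (b + 2 + k) (by omega) (by omega))

noncomputable def clusterA {K : Type*} [Field K] {m : ℕ} (α : Fin m → K) :
    Subalgebra K (Polynomial K) where
  carrier := {f | ∀ i j : Fin m, f.eval (α i) = f.eval (α j)}
  mul_mem' := fun {a b} ha hb i j => by simp [eval_mul, ha i j, hb i j]
  add_mem' := fun {a b} ha hb i j => by simp [eval_add, ha i j, hb i j]
  algebraMap_mem' := fun c i j => by simp
  one_mem' := fun i j => by simp
  zero_mem' := fun i j => by simp

theorem one_cluster_subalgebra_codim_and_generators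
    {K : Type*} [Field K] [IsAlgClosed K] [CharZero K]
    (m : ℕ) (hm : 2 ≤ m) (α : Fin m → K) (hinj : Function.Injective α) :
    ∃ A : Subalgebra K (Polynomial K),
      (∀ f : Polynomial K, f ∈ A ↔ ∀ i j : Fin m, f.eval (α i) = f.eval (α j)) ∧
      Module.finrank K (Polynomial K ⧸ Subalgebra.toSubmodule A) = m - 1 ∧
      A = Algebra.adjoin K (Set.range fun i : Fin m =>
        (Polynomial.X - Polynomial.C (α ⟨0, by omega⟩)) ^ ((i : ℕ) + 1) *
          ∏ j ∈ Finset.univ.erase (⟨0, by omega⟩ : Fin m),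
            (Polynomial.X - Polynomial.C (α j))) := by
  classical
  have hz0 : (0 : ℕ) < m := by omega
  set z : Fin m := ⟨0, hz0⟩ with hzdef
  refine ⟨clusterA α, fun f => Iff.rfl, ?_, ?_⟩
  · -- finrank part
    let e : Fin (m - 1) → Fin m := fun i => ⟨i.val + 1, by omega⟩
    let φ : Polynomial K →ₗ[K] (Fin (m - 1) → K) :=
      { toFun := fun f i => f.eval (α (e i)) - f.eval (α z)
        map_add' := fun f g => by funext i; simp [eval_add]; ring
        map_smul' := fun c f => by funext i; simp [smul_sub, smul_eq_mul, mul_sub] }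
    have hφ : ∀ (f : Polynomial K) (i : Fin (m-1)), φ f i = f.eval (α (e i)) - f.eval (α z) :=
      fun f i => rfl
    have hker : Subalgebra.toSubmodule (clusterA α) = LinearMap.ker φ := by
      ext f
      simp only [Subalgebra.mem_toSubmodule, LinearMap.mem_ker]
      constructor
      · intro h
        funext i
        rw [hφ, h (e i) z, sub_self]
        simp
      · intro h i j
        have key : ∀ i : Fin m, f.eval (α i) = f.eval (α z) := by
          intro i
          by_cases hi : i = z
          · rw [hi]
          · have hpos : 0 < i.val := by
              rcases Nat.eq_zero_or_pos i.val with h0 | h0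
              · exact absurd (Fin.ext h0) hi
              · exact h0
            have h2 := congrFun h ⟨i.val - 1, by omega⟩
            have he : e ⟨i.val - 1, by omega⟩ = i := by
              apply Fin.ext; simp [e]; omega
            rw [hφ, he] at h2
            exact sub_eq_zero.mp h2
        rw [key i, key j]
    have hsurj : Function.Surjective φ := by
      intro w
      set v : Fin m → K := fun j => if j = z then 0 else w ⟨j.val - 1, by omega⟩ with hv
      refine ⟨Lagrange.interpolate Finset.univ α v, ?_⟩
      have hIOn : Set.InjOn α ↑(Finset.univ : Finset (Fin m)) := fun x _ y _ h => hinj h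
      have h1 : ∀ j, Polynomial.eval (α j) (Lagrange.interpolate Finset.univ α v) = v j :=
        fun j => Lagrange.eval_interpolate_at_node v hIOn (Finset.mem_univ j)
      funext i
      rw [hφ, h1, h1]
      have hne : e i ≠ z := by
        intro h
        have := congrArg Fin.val h
        simp [e, hzdef] at this
      have hvz : v z = 0 := by simp [hv]
      have hvei : v (e i) = w i := by
        rw [hv]
        simp only [if_neg hne]
        exact congrArg w (by ext; simp [e])
      rw [hvei, hvz, sub_zero]
    rw [hker]
    exact ((LinearMap.quotKerEquivOfSurjective φ hsurj).finrank_eq).trans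
      (Module.finrank_fin_fun K)
  · -- generation part
    set q : Polynomial K := ∏ j ∈ Finset.univ.erase z, (X - C (α j)) with hqdef
    have hqmonic : q.Monic := monic_prod_of_monic _ _ fun j _ => monic_X_sub_C _
    have hqdeg : q.natDegree = m - 1 := by
      rw [hqdef, natDegree_prod _ _ fun j _ => X_sub_C_ne_zero (α j)]
      simp [Finset.card_erase_of_mem]
    set B := Algebra.adjoin K (Set.range fun i : Fin m =>
        (X - C (α z)) ^ ((i : ℕ) + 1) * q) with hBdef
    show clusterA α = B
    have hgenB : ∀ N, 1 ≤ N → N ≤ m → (X - C (α z)) ^ N * q ∈ B := by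
      intro N h1 hNm
      apply Algebra.subset_adjoin
      refine ⟨⟨N - 1, by omega⟩, ?_⟩
      simp only [Fin.val_mk]
      rw [show N - 1 + 1 = N by omega]
    have hrN : ∀ N, 1 ≤ N → (X - C (α z)) ^ N * q ∈ B :=
      aux_pow_mul_mem m hm (α z) q hqmonic hqdeg B hgenB
    have hkey : ∀ h : Polynomial K, (X - C (α z)) * q * h ∈ B := by
      intro h
      nth_rewrite 1 [← sum_taylor_eq h (α z)]
      rw [Polynomial.sum_def, Finset.mul_sum]
      refine Subalgebra.sum_mem _ fun n _ => ?_
      have hrw : (X - C (α z)) * q * (C ((taylor (α z) h).coeff n) * (X - C (α z)) ^ n)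
          = C ((taylor (α z) h).coeff n) * ((X - C (α z)) ^ (n + 1) * q) := by ring
      rw [hrw]
      have hC : (C ((taylor (α z) h).coeff n) : Polynomial K) ∈ B := B.algebraMap_mem _
      exact mul_mem hC (hrN (n + 1) (by omega))
    apply le_antisymm
    · intro f hf
      have hf0 : ∀ j : Fin m, f.eval (α j) = f.eval (α z) := fun j => hf j z
      have hdvd : (X - C (α z)) * q ∣ f - C (f.eval (α z)) := by
        have hd : ∏ j ∈ Finset.univ, (X - C (α j)) ∣ f - C (f.eval (α z)) := by
          apply Finset.prod_dvd_of_coprime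
          · exact (Polynomial.pairwise_coprime_X_sub_C hinj).set_pairwise _
          · intro j _
            rw [dvd_iff_isRoot]
            simp [IsRoot, hf0 j]
        rwa [← Finset.mul_prod_erase _ _ (Finset.mem_univ z)] at hd
      obtain ⟨h, hh⟩ := hdvd
      have hfeq : f = (X - C (α z)) * q * h + C (f.eval (α z)) := by
        rw [← hh]; ring
      rw [hfeq]
      exact add_mem (hkey h) (B.algebraMap_mem _)
    · rw [hBdef, Algebra.adjoin_le_iff]
      rintro x ⟨i, rfl⟩
      intro j k
      have h0 : ∀ j : Fin m, ((X - C (α z)) ^ ((i : ℕ) + 1) * q).eval (α j) = 0 := by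
        intro j
        by_cases hj : j = z
        · subst hj
          simp [eval_pow]
        · rw [eval_mul]
          have : q.eval (α j) = 0 := by
            rw [hqdef, eval_prod]
            apply Finset.prod_eq_zero (Finset.mem_erase.mpr ⟨hj, Finset.mem_univ j⟩)
            simp
          rw [this, mul_zero]
      rw [h0 j, h0 k]
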